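/- Let r ≥ 2 be an integer. The polynomial equation ((y+x)^{r+1} − (y−x)^{r+1})/(2x) − r − 1 = 0 (equivalently Σ_{i=0}^{⌊r/2⌋} binom(r+1, 2i+1) x^{2i} y^{r−2i} = r+1) has a unique formal power series solution y(x) ∈ 1 + x²ℚ[[x²]], and it begins y(x) = 1 − ((r−1)/6)x² + ((r−1)(r−3)(2r+1)/360)x⁴ + O(x⁶). -/

import Mathlib

open PowerSeries Finset

namespace Stmt8Aux

lemma coeffA {y z : PowerSeries ℚ} {n : ℕ}
    (h : ∀ k ≤ n, PowerSeries.coeff k y = PowerSeries.coeff k z) :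
    ∀ p : ℕ, ∀ m ≤ n, PowerSeries.coeff m (y ^ p) = PowerSeries.coeff m (z ^ p) := by
  intro p
  induction p with
  | zero => intro m _; simp
  | succ p ih =>
      intro m hm
      rw [pow_succ, pow_succ, PowerSeries.coeff_mul, PowerSeries.coeff_mul]
      refine Finset.sum_congr rfl ?_
      rintro ⟨i, j⟩ hij
      rw [Finset.HasAntidiagonal.mem_antidiagonal] at hij
      have hi : i ≤ n := le_trans (le_trans (Nat.le_add_right i j) hij.le) hm
      have hj : j ≤ n := le_trans (le_trans (Nat.le_add_left j i) hij.le) hm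
      rw [ih i hi, h j hj]

lemma coeff_zero_pow (y : PowerSeries ℚ) (h : PowerSeries.coeff 0 y = 1) (p : ℕ) :
    PowerSeries.coeff 0 (y ^ p) = 1 := by
  rw [PowerSeries.coeff_zero_eq_constantCoeff] at h ⊢
  rw [map_pow, h, one_pow]

lemma coeffB {y z : PowerSeries ℚ} {n : ℕ}
    (h0y : PowerSeries.coeff 0 y = 1) (h0z : PowerSeries.coeff 0 z = 1)
    (h : ∀ k < n, PowerSeries.coeff k y = PowerSeries.coeff k z) :
    ∀ p : ℕ, PowerSeries.coeff n (y ^ p) - PowerSeries.coeff n (z ^ p)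
      = p * (PowerSeries.coeff n y - PowerSeries.coeff n z) := by
  intro p
  rcases Nat.eq_zero_or_pos n with rfl | hn
  · rw [coeff_zero_pow y h0y, coeff_zero_pow z h0z, h0y, h0z]; ring
  induction p with
  | zero => simp
  | succ p ih =>
      have peel : ∀ g : ℕ → ℚ, ∀ m : ℕ,
          ∑ k ∈ Finset.range (m+2), g k = g 0 + (∑ k ∈ Finset.range m, g (k+1)) + g (m+1) := by
        intro g m
        rw [Finset.sum_range_succ, Finset.sum_range_succ']
        ring
      rw [pow_succ, pow_succ, PowerSeries.coeff_mul, PowerSeries.coeff_mul,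
        Finset.Nat.sum_antidiagonal_eq_sum_range_succ_mk,
        Finset.Nat.sum_antidiagonal_eq_sum_range_succ_mk]
      obtain ⟨m, rfl⟩ : ∃ m, n = m + 1 := ⟨n - 1, (Nat.succ_pred_eq_of_pos hn).symm⟩
      rw [show (m + 1).succ = m + 2 from rfl, peel, peel]
      have hmid : ∀ i ∈ Finset.range m,
          PowerSeries.coeff ((i+1, m+1-(i+1)).1) (y ^ p) * PowerSeries.coeff ((i+1, m+1-(i+1)).2) y
          = PowerSeries.coeff ((i+1, m+1-(i+1)).1) (z ^ p) * PowerSeries.coeff ((i+1, m+1-(i+1)).2) z := by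
        intro i hi
        rw [Finset.mem_range] at hi
        simp only
        have h2 : m + 1 - (i + 1) < m + 1 := by omega
        rw [coeffA (n := m) (fun k hk => h k (by omega)) p (i+1) (by omega), h _ h2]
      rw [Finset.sum_congr rfl hmid]
      simp only
      have e2 : m + 1 - (m + 1) = 0 := by omega
      have e1 : m + 1 - 0 = m + 1 := rfl
      rw [e2, e1, h0y, h0z, coeff_zero_pow y h0y p, coeff_zero_pow z h0z p]
      push_cast
      linear_combination ih


noncomputable def S (r : ℕ) (y : PowerSeries ℚ) : PowerSeries ℚ :=
  ∑ i ∈ Finset.range (r / 2 + 1),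
    PowerSeries.C (Nat.choose (r + 1) (2 * i + 1) : ℚ) * PowerSeries.X ^ (2 * i)
      * y ^ (r - 2 * i)

lemma coeff_term (a : ℚ) (e p n : ℕ) (y : PowerSeries ℚ) :
    PowerSeries.coeff n (PowerSeries.C a * PowerSeries.X ^ e * y ^ p)
      = if e ≤ n then a * PowerSeries.coeff (n - e) (y ^ p) else 0 := by
  rw [mul_assoc, PowerSeries.coeff_C_mul, PowerSeries.coeff_X_pow_mul']
  split_ifs <;> simp

lemma coeff_S (r n : ℕ) (y : PowerSeries ℚ) :
    PowerSeries.coeff n (S r y) = ∑ i ∈ Finset.range (r / 2 + 1),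
      if 2 * i ≤ n then (Nat.choose (r + 1) (2 * i + 1) : ℚ)
        * PowerSeries.coeff (n - 2 * i) (y ^ (r - 2 * i)) else 0 := by
  rw [S, map_sum]
  exact Finset.sum_congr rfl fun i _ => coeff_term _ _ _ _ _

lemma coeffC {y z : PowerSeries ℚ} {n : ℕ} (r : ℕ)
    (h : ∀ k ≤ n, PowerSeries.coeff k y = PowerSeries.coeff k z) :
    ∀ m ≤ n, PowerSeries.coeff m (S r y) = PowerSeries.coeff m (S r z) := by
  intro m hm
  rw [coeff_S, coeff_S]
  refine Finset.sum_congr rfl fun i _ => ?_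
  split_ifs with hi
  · rw [coeffA h _ (m - 2*i) (le_trans (Nat.sub_le _ _) hm)]
  · rfl

lemma coeffD {y z : PowerSeries ℚ} {n : ℕ} (r : ℕ) (hr : 2 ≤ r)
    (h0y : PowerSeries.coeff 0 y = 1) (h0z : PowerSeries.coeff 0 z = 1)
    (h : ∀ k < n, PowerSeries.coeff k y = PowerSeries.coeff k z) :
    PowerSeries.coeff n (S r y) - PowerSeries.coeff n (S r z)
      = ((r : ℚ) + 1) * r * (PowerSeries.coeff n y - PowerSeries.coeff n z) := by
  rw [coeff_S, coeff_S, ← Finset.sum_sub_distrib]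
  have hr2 : r / 2 + 1 = (r / 2) + 1 := rfl
  rw [Finset.sum_range_succ']
  have hrest : ∀ i ∈ Finset.range (r / 2),
      ((if 2 * (i+1) ≤ n then (Nat.choose (r + 1) (2 * (i+1) + 1) : ℚ)
        * PowerSeries.coeff (n - 2 * (i+1)) (y ^ (r - 2 * (i+1))) else 0)
      - (if 2 * (i+1) ≤ n then (Nat.choose (r + 1) (2 * (i+1) + 1) : ℚ)
        * PowerSeries.coeff (n - 2 * (i+1)) (z ^ (r - 2 * (i+1))) else 0)) = 0 := by
    intro i _
    split_ifs with hi
    · rcases Nat.eq_zero_or_pos n with rfl | hn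
      · omega
      have hlt : n - 2 * (i+1) ≤ n - 1 := by omega
      rw [coeffA (n := n - 1) (fun k hk => h k (by omega)) _ _ hlt]
      ring
    · ring
  rw [Finset.sum_congr rfl hrest, Finset.sum_const_zero, zero_add]
  simp only [Nat.mul_zero, Nat.zero_le, if_true, Nat.sub_zero]
  rw [Nat.choose_one_right]
  push_cast
  have := coeffB h0y h0z h r
  linear_combination ((r : ℚ) + 1) * this

lemma coeff_zero_S (r : ℕ) (y : PowerSeries ℚ) (h0 : PowerSeries.coeff 0 y = 1) :
    PowerSeries.coeff 0 (S r y) = (r : ℚ) + 1 := by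
  rw [coeff_S, Finset.sum_range_succ']
  have : ∀ i ∈ Finset.range (r / 2),
      (if 2 * (i+1) ≤ 0 then (Nat.choose (r + 1) (2 * (i+1) + 1) : ℚ)
        * PowerSeries.coeff (0 - 2 * (i+1)) (y ^ (r - 2 * (i+1))) else 0) = 0 := by
    intro i _
    rw [if_neg (by omega)]
  rw [Finset.sum_congr rfl this, Finset.sum_const_zero, zero_add]
  rw [if_pos (by omega : 2*0 ≤ 0)]
  rw [show (0 : ℕ) - 2*0 = 0 from rfl, show r - 2*0 = r from rfl, coeff_zero_pow y h0,
    Nat.choose_one_right, mul_one]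
  push_cast
  ring

def IsEven (f : PowerSeries ℚ) : Prop := ∀ n : ℕ, Odd n → PowerSeries.coeff n f = 0

lemma IsEven.mul {f g : PowerSeries ℚ} (hf : IsEven f) (hg : IsEven g) : IsEven (f * g) := by
  intro n hn
  rw [PowerSeries.coeff_mul]
  refine Finset.sum_eq_zero ?_
  rintro ⟨i, j⟩ hij
  rw [Finset.HasAntidiagonal.mem_antidiagonal] at hij
  rcases Nat.even_or_odd i with hi | hi
  · have : Odd j := by subst hij; rcases hi with ⟨a, rfl⟩; rcases hn with ⟨b, hb⟩; exact ⟨b - a, by omega⟩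
    rw [hg j this, mul_zero]
  · rw [hf i hi, zero_mul]

lemma IsEven.pow {f : PowerSeries ℚ} (hf : IsEven f) (p : ℕ) : IsEven (f ^ p) := by
  induction p with
  | zero =>
      intro n hn
      rw [pow_zero, PowerSeries.coeff_one, if_neg (fun hh => by subst hh; simp [Nat.odd_iff] at hn)]
  | succ p ih => rw [pow_succ]; exact ih.mul hf

lemma IsEven.C (a : ℚ) : IsEven (PowerSeries.C a) := by
  intro n hn
  rw [PowerSeries.coeff_C, if_neg (fun hh => by subst hh; simp [Nat.odd_iff] at hn)]

lemma IsEven.X_pow_even (i : ℕ) : IsEven (PowerSeries.X ^ (2 * i) : PowerSeries ℚ) := by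
  intro n hn
  rw [PowerSeries.coeff_X_pow, if_neg (fun hh => by subst hh; simp [Nat.odd_iff, Nat.mul_mod_right] at hn)]

lemma IsEven.S {y : PowerSeries ℚ} (r : ℕ) (hy : IsEven y) : IsEven (Stmt8Aux.S r y) := by
  intro n hn
  rw [coeff_S]
  refine Finset.sum_eq_zero fun i _ => ?_
  split_ifs with hi
  · rw [(hy.pow _) (n - 2*i) (by rcases hn with ⟨b, hb⟩; exact ⟨b - i, by omega⟩), mul_zero]
  · rfl


noncomputable def Y (r : ℕ) : ℕ → PowerSeries ℚ
  | 0 => 1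
  | n + 1 => Y r n + PowerSeries.C
      (if n = 0 then 0 else -(PowerSeries.coeff n (S r (Y r n)) / (((r : ℚ) + 1) * r)))
      * PowerSeries.X ^ n

lemma coeff_Y_succ (r n k : ℕ) (hk : k ≠ n) :
    PowerSeries.coeff k (Y r (n+1)) = PowerSeries.coeff k (Y r n) := by
  rw [Y, map_add, PowerSeries.coeff_C_mul, PowerSeries.coeff_X_pow, if_neg hk, mul_zero, add_zero]

lemma coeff_Y_stab (r k : ℕ) : ∀ n, k < n → PowerSeries.coeff k (Y r n) = PowerSeries.coeff k (Y r (k+1)) := by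
  intro n
  induction n with
  | zero => omega
  | succ n ih =>
      intro hkn
      rcases Nat.lt_or_ge k n with h | h
      · rw [coeff_Y_succ r n k (by omega), ih h]
      · have : k = n := by omega
        subst this
        rfl

lemma Y_inv (r : ℕ) (hr : 2 ≤ r) : ∀ n,
    PowerSeries.coeff 0 (Y r n) = 1 ∧ IsEven (Y r n) ∧
    ∀ k < n, PowerSeries.coeff k (S r (Y r n))
      = PowerSeries.coeff k (PowerSeries.C ((r : ℚ) + 1)) := by
  have hrne : ((r : ℚ) + 1) * r ≠ 0 := by
    have : (0:ℚ) < r := by exact_mod_cast Nat.lt_of_lt_of_le (by norm_num) hr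
    positivity
  intro n
  induction n with
  | zero =>
      refine ⟨by rw [show Y r 0 = 1 from rfl]; simp, ?_, by omega⟩
      intro k hk
      rw [show (Y r 0) = 1 from rfl, PowerSeries.coeff_one,
        if_neg (fun hh => by subst hh; simp [Nat.odd_iff] at hk)]
  | succ n ih =>
      obtain ⟨ih0, ihe, ihE⟩ := ih
      set d : ℚ := if n = 0 then 0
        else -(PowerSeries.coeff n (S r (Y r n)) / (((r : ℚ) + 1) * r)) with hd
      have hYs : Y r (n+1) = Y r n + PowerSeries.C d * PowerSeries.X ^ n := rfl
      have hcoeffn : PowerSeries.coeff n (Y r (n+1)) = PowerSeries.coeff n (Y r n) + d := by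
        rw [hYs, map_add, PowerSeries.coeff_C_mul, PowerSeries.coeff_X_pow, if_pos rfl, mul_one]
      have h0 : PowerSeries.coeff 0 (Y r (n+1)) = 1 := by
        rcases Nat.eq_zero_or_pos n with rfl | hn
        · rw [hcoeffn, ih0, hd, if_pos rfl, add_zero]
        · rw [coeff_Y_succ r n 0 (by omega), ih0]
      have heven : IsEven (Y r (n+1)) := by
        intro k hk
        rcases eq_or_ne k n with rfl | hkn
        · have hne : k ≠ 0 := by rintro rfl; simp [Nat.odd_iff] at hk
          rw [hcoeffn, ihe k hk, hd, if_neg hne, IsEven.S r ihe k hk, zero_add]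
          norm_num
        · rw [coeff_Y_succ r n k hkn, ihe k hk]
      refine ⟨h0, heven, ?_⟩
      intro k hk
      rcases Nat.lt_or_ge k n with hkn | hkn
      · have hagree : ∀ j ≤ k, PowerSeries.coeff j (Y r (n+1)) = PowerSeries.coeff j (Y r n) :=
          fun j hj => coeff_Y_succ r n j (by omega)
        rw [coeffC r hagree k le_rfl, ihE k hkn]
      · have hkeq : k = n := by omega
        subst hkeq
        rcases Nat.eq_zero_or_pos k with rfl | hkpos
        · rw [coeff_zero_S r _ h0]
          simp
        · have hagree : ∀ j < k, PowerSeries.coeff j (Y r (k+1)) = PowerSeries.coeff j (Y r k) :=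
            fun j hj => coeff_Y_succ r k j (by omega)
          have hD := coeffD r hr h0 ih0 hagree
          rw [hcoeffn] at hD
          have hdval : d = -(PowerSeries.coeff k (S r (Y r k)) / (((r : ℚ) + 1) * r)) := by
            rw [hd, if_neg (by omega)]
          have : PowerSeries.coeff k (S r (Y r (k+1))) = 0 := by
            have h2 : PowerSeries.coeff k (S r (Y r (k+1)))
                = PowerSeries.coeff k (S r (Y r k)) + ((r : ℚ) + 1) * r * d := by
              linear_combination hD
            rw [h2, hdval]
            field_simp
            ring
          rw [this, PowerSeries.coeff_C, if_neg (by omega)]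

noncomputable def ysol (r : ℕ) : PowerSeries ℚ :=
  PowerSeries.mk fun k => PowerSeries.coeff k (Y r (k+1))

lemma coeff_ysol (r k : ℕ) : PowerSeries.coeff k (ysol r)
    = PowerSeries.coeff k (Y r (k+1)) := by
  rw [ysol, PowerSeries.coeff_mk]

lemma coeff_ysol' (r k m : ℕ) (h : k < m) : PowerSeries.coeff k (ysol r)
    = PowerSeries.coeff k (Y r m) := by
  rw [coeff_ysol, coeff_Y_stab r k m h]

lemma coeff_S_small (r N n : ℕ) (y : PowerSeries ℚ) (hn : n < 2 * N) :
    PowerSeries.coeff n (S r y) = ∑ i ∈ Finset.range N,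
      (if 2 * i ≤ n then (Nat.choose (r + 1) (2 * i + 1) : ℚ)
        * PowerSeries.coeff (n - 2 * i) (y ^ (r - 2 * i)) else 0) := by
  rw [coeff_S]
  have h1 : ∑ i ∈ Finset.range (r / 2 + 1),
      (if 2 * i ≤ n then (Nat.choose (r + 1) (2 * i + 1) : ℚ)
        * PowerSeries.coeff (n - 2 * i) (y ^ (r - 2 * i)) else 0)
    = ∑ i ∈ Finset.range (r / 2 + 1 + N),
      (if 2 * i ≤ n then (Nat.choose (r + 1) (2 * i + 1) : ℚ)
        * PowerSeries.coeff (n - 2 * i) (y ^ (r - 2 * i)) else 0) := by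
    refine Finset.sum_subset (Finset.range_subset_range.mpr (by omega)) ?_
    intro i _ hi
    rw [Finset.mem_range, not_lt] at hi
    have : Nat.choose (r + 1) (2 * i + 1) = 0 := Nat.choose_eq_zero_of_lt (by omega)
    split_ifs <;> simp [this]
  rw [h1]
  refine (Finset.sum_subset (Finset.range_subset_range.mpr (by omega)) ?_).symm
  intro i _ hi
  rw [Finset.mem_range, not_lt] at hi
  exact if_neg (by omega)

lemma cast_c3 : ∀ n : ℕ, ((n.choose 3 : ℕ) : ℚ) = n * (n - 1) * (n - 2) / 6 := by
  intro n
  induction n with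
  | zero => simp
  | succ n ih =>
      rw [Nat.choose_succ_succ]
      push_cast
      rw [Nat.cast_choose_two, ih]
      push_cast
      ring

lemma cast_c4 : ∀ n : ℕ, ((n.choose 4 : ℕ) : ℚ) = n * (n - 1) * (n - 2) * (n - 3) / 24 := by
  intro n
  induction n with
  | zero => simp
  | succ n ih =>
      rw [Nat.choose_succ_succ]
      push_cast
      rw [cast_c3, ih]
      push_cast
      ring

lemma cast_c5 : ∀ n : ℕ, ((n.choose 5 : ℕ) : ℚ) = n * (n - 1) * (n - 2) * (n - 3) * (n - 4) / 120 := by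
  intro n
  induction n with
  | zero => simp
  | succ n ih =>
      rw [Nat.choose_succ_succ]
      push_cast
      rw [cast_c4, ih]
      push_cast
      ring

lemma coeff2_pow {y : PowerSeries ℚ} (h0 : PowerSeries.coeff 0 y = 1) (he : IsEven y) (p : ℕ) :
    PowerSeries.coeff 2 (y ^ p) = p * PowerSeries.coeff 2 y := by
  induction p with
  | zero => simp [PowerSeries.coeff_one]
  | succ p ih =>
      rw [pow_succ, PowerSeries.coeff_mul, Finset.Nat.sum_antidiagonal_eq_sum_range_succ_mk]
      rw [Finset.sum_range_succ, Finset.sum_range_succ, Finset.sum_range_succ,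
        Finset.range_zero, Finset.sum_empty]
      simp only
      rw [show (2:ℕ) - 0 = 2 from rfl, show (2:ℕ) - 1 = 1 from rfl, show (2:ℕ) - 2 = 0 from rfl]
      rw [coeff_zero_pow y h0, (he.pow p) 1 odd_one, h0, ih]
      push_cast
      ring

lemma coeff4_pow {y : PowerSeries ℚ} (h0 : PowerSeries.coeff 0 y = 1) (he : IsEven y) (p : ℕ) :
    PowerSeries.coeff 4 (y ^ p) = p * PowerSeries.coeff 4 y
      + (p.choose 2 : ℚ) * (PowerSeries.coeff 2 y) ^ 2 := by
  induction p with
  | zero => simp [PowerSeries.coeff_one]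
  | succ p ih =>
      rw [pow_succ, PowerSeries.coeff_mul, Finset.Nat.sum_antidiagonal_eq_sum_range_succ_mk]
      rw [Finset.sum_range_succ, Finset.sum_range_succ, Finset.sum_range_succ,
        Finset.sum_range_succ, Finset.sum_range_succ, Finset.range_zero, Finset.sum_empty]
      simp only
      rw [show (4:ℕ) - 0 = 4 from rfl, show (4:ℕ) - 1 = 3 from rfl, show (4:ℕ) - 2 = 2 from rfl,
        show (4:ℕ) - 3 = 1 from rfl, show (4:ℕ) - 4 = 0 from rfl]
      rw [coeff_zero_pow y h0, (he.pow p) 1 odd_one, (he.pow p) 3 (by decide), h0,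
        he 1 odd_one, he 3 (by decide), ih, coeff2_pow h0 he p]
      rw [Nat.choose_succ_succ, Nat.choose_one_right]
      push_cast
      ring

lemma sol_coeff2 (r : ℕ) (hr : 2 ≤ r) (y : PowerSeries ℚ)
    (h0 : PowerSeries.coeff 0 y = 1) (he : IsEven y)
    (heq : S r y = PowerSeries.C ((r : ℚ) + 1)) :
    PowerSeries.coeff 2 y = -((r : ℚ) - 1) / 6 := by
  have hq0 : (0:ℚ) < (r:ℚ) := by exact_mod_cast Nat.lt_of_lt_of_le (by norm_num) hr
  have hne : ((r : ℚ) + 1) * r ≠ 0 := by positivity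
  have h2 : PowerSeries.coeff 2 (S r y) = 0 := by
    rw [heq, PowerSeries.coeff_C, if_neg (by omega)]
  rw [coeff_S_small r 2 2 y (by omega)] at h2
  rw [Finset.sum_range_succ, Finset.sum_range_succ, Finset.range_zero, Finset.sum_empty] at h2
  rw [if_pos (by omega), if_pos (by omega)] at h2
  rw [show (2:ℕ) - 2*0 = 2 from rfl, show (2:ℕ) - 2*1 = 0 from rfl,
    show r - 2*0 = r from rfl] at h2
  rw [coeff2_pow h0 he r, coeff_zero_pow _ h0, Nat.choose_one_right, cast_c3] at h2
  have hsub : ((r:ℚ) + 1) * (r : ℚ) * (PowerSeries.coeff 2 y - (-((r : ℚ) - 1) / 6)) = 0 := by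
    push_cast at h2 ⊢
    linear_combination h2
  have := mul_eq_zero.mp hsub
  rcases this with h | h
  · exact absurd h hne
  · linarith [h]

lemma sol_coeff4 (r : ℕ) (hr : 2 ≤ r) (y : PowerSeries ℚ)
    (h0 : PowerSeries.coeff 0 y = 1) (he : IsEven y)
    (heq : S r y = PowerSeries.C ((r : ℚ) + 1)) :
    PowerSeries.coeff 4 y = ((r : ℚ) - 1) * ((r : ℚ) - 3) * (2 * (r : ℚ) + 1) / 360 := by
  have hq0 : (0:ℚ) < (r:ℚ) := by exact_mod_cast Nat.lt_of_lt_of_le (by norm_num) hr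
  have hne : ((r : ℚ) + 1) * r ≠ 0 := by positivity
  have ha2 := sol_coeff2 r hr y h0 he heq
  have h4 : PowerSeries.coeff 4 (S r y) = 0 := by
    rw [heq, PowerSeries.coeff_C, if_neg (by omega)]
  rw [coeff_S_small r 3 4 y (by omega)] at h4
  rw [Finset.sum_range_succ, Finset.sum_range_succ, Finset.sum_range_succ,
    Finset.range_zero, Finset.sum_empty] at h4
  rw [if_pos (by omega), if_pos (by omega), if_pos (by omega)] at h4
  rw [show (4:ℕ) - 2*0 = 4 from rfl, show (4:ℕ) - 2*1 = 2 from rfl,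
    show (4:ℕ) - 2*2 = 0 from rfl, show r - 2*0 = r from rfl] at h4
  rw [coeff4_pow h0 he r, coeff2_pow h0 he (r - 2), coeff_zero_pow _ h0,
    Nat.choose_one_right, cast_c3, cast_c5, Nat.cast_choose_two, ha2] at h4
  have hcast : ((r - 2 : ℕ) : ℚ) = (r : ℚ) - 2 := by
    rw [Nat.cast_sub hr]
    norm_num
  rw [hcast] at h4
  have hsub : ((r:ℚ) + 1) * (r : ℚ) *
      (PowerSeries.coeff 4 y - ((r : ℚ) - 1) * ((r : ℚ) - 3) * (2 * (r : ℚ) + 1) / 360) = 0 := by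
    push_cast at h4 ⊢
    linear_combination h4
  rcases mul_eq_zero.mp hsub with h | h
  · exact absurd h hne
  · linarith [h]

lemma ysol_spec (r : ℕ) (hr : 2 ≤ r) :
    PowerSeries.coeff 0 (ysol r) = 1 ∧ IsEven (ysol r) ∧
      S r (ysol r) = PowerSeries.C ((r : ℚ) + 1) := by
  refine ⟨?_, ?_, ?_⟩
  · rw [coeff_ysol]
    exact (Y_inv r hr 1).1
  · intro k hk
    rw [coeff_ysol]
    exact (Y_inv r hr (k+1)).2.1 k hk
  · ext n
    have hagree : ∀ k ≤ n, PowerSeries.coeff k (ysol r) = PowerSeries.coeff k (Y r (n+1)) :=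
      fun k hk => coeff_ysol' r k (n+1) (by omega)
    rw [coeffC r hagree n le_rfl]
    exact (Y_inv r hr (n+1)).2.2 n (by omega)

lemma sol_unique (r : ℕ) (hr : 2 ≤ r) (y z : PowerSeries ℚ)
    (h0y : PowerSeries.coeff 0 y = 1) (h0z : PowerSeries.coeff 0 z = 1)
    (heqy : S r y = PowerSeries.C ((r : ℚ) + 1))
    (heqz : S r z = PowerSeries.C ((r : ℚ) + 1)) : y = z := by
  have hq0 : (0:ℚ) < (r:ℚ) := by exact_mod_cast Nat.lt_of_lt_of_le (by norm_num) hr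
  have hne : ((r : ℚ) + 1) * r ≠ 0 := by positivity
  ext n
  induction n using Nat.strong_induction_on with
  | _ n ih =>
      have hD := coeffD r hr h0y h0z ih
      rw [heqy, heqz, sub_self] at hD
      rcases mul_eq_zero.mp hD.symm with h | h
      · exact absurd h hne
      · linarith [h]

end Stmt8Aux

/-- `isSol r y` says that `y ∈ 1 + x²ℚ[[x²]]` and `y` solves
`Σ_{i=0}^{⌊r/2⌋} binom(r+1, 2i+1) x^{2i} y^{r-2i} = r+1`. -/
def isSol (r : ℕ) (y : PowerSeries ℚ) : Prop :=
  PowerSeries.coeff 0 y = 1 ∧ (∀ n : ℕ, Odd n → PowerSeries.coeff n y = 0) ∧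
    ∑ i ∈ Finset.range (r / 2 + 1),
        PowerSeries.C (Nat.choose (r + 1) (2 * i + 1) : ℚ) * PowerSeries.X ^ (2 * i)
          * y ^ (r - 2 * i)
      = PowerSeries.C ((r : ℚ) + 1)

lemma isSol_iff (r : ℕ) (y : PowerSeries ℚ) :
    isSol r y ↔ (PowerSeries.coeff 0 y = 1 ∧ Stmt8Aux.IsEven y ∧
      Stmt8Aux.S r y = PowerSeries.C ((r : ℚ) + 1)) := Iff.rfl

/-- For an integer `r ≥ 2`, the equation
`((y+x)^{r+1} - (y-x)^{r+1})/(2x) - r - 1 = 0`, i.e.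
`Σ_{i=0}^{⌊r/2⌋} binom(r+1,2i+1) x^{2i} y^{r-2i} = r+1`, has a unique formal power series
solution `y(x) ∈ 1 + x²ℚ[[x²]]`, and it begins
`y(x) = 1 - ((r-1)/6)x² + ((r-1)(r-3)(2r+1)/360)x⁴ + O(x⁶)`. -/
theorem stmt8 (r : ℕ) (hr : 2 ≤ r) :
    (∃! y : PowerSeries ℚ, isSol r y) ∧
    ∀ y : PowerSeries ℚ, isSol r y →
      PowerSeries.coeff 2 y = -((r : ℚ) - 1) / 6 ∧
      PowerSeries.coeff 4 y = ((r : ℚ) - 1) * ((r : ℚ) - 3) * (2 * (r : ℚ) + 1) / 360 := by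
  constructor
  · refine ⟨Stmt8Aux.ysol r, (isSol_iff r _).mpr (Stmt8Aux.ysol_spec r hr), ?_⟩
    intro z hz
    obtain ⟨h0z, hez, heqz⟩ := (isSol_iff r z).mp hz
    obtain ⟨h0y, hey, heqy⟩ := Stmt8Aux.ysol_spec r hr
    exact Stmt8Aux.sol_unique r hr z (Stmt8Aux.ysol r) h0z h0y heqz heqy
  · intro y hy
    obtain ⟨h0, he, heq⟩ := (isSol_iff r y).mp hy
    exact ⟨Stmt8Aux.sol_coeff2 r hr y h0 he heq, Stmt8Aux.sol_coeff4 r hr y h0 he heq⟩
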